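/- Let k ≥ 1 be an integer and set k' = ⌊(k−1)/2⌋. Then the rational number ∑_{a=0, a≠k/2}^{k} (−1)^a · binom(k,a) / (k − 2a) (the sum over all a ∈ {0,…,k} with k − 2a ≠ 0) equals 2^k · (−2)^{k'} · k'! / k!! if k is odd, and equals 0 if k is even. -/
import Mathlib
open Finset

lemma prodval (m : ℕ) : (∏ a ∈ Finset.range (2*m+2), (((2*m+1:ℕ):ℚ) - 2*a))
    = (-1)^(m+1) * ((Nat.doubleFactorial (2*m+1) : ℚ))^2 := by
  induction m with
  | zero => norm_num [Finset.prod_range_succ]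
  | succ m ih =>
    have h1 : 2*(m+1)+2 = (2*m+3)+1 := by ring
    rw [h1, Finset.prod_range_succ]
    have h2 : (∏ a ∈ Finset.range (2*m+3), (((2*(m+1)+1:ℕ):ℚ) - 2*a))
        = (∏ a ∈ Finset.range (2*m+2), (((2*m+1:ℕ):ℚ) - 2*a)) * ((2*m+3:ℕ):ℚ) := by
      rw [Finset.prod_range_succ' (fun a => ((2*(m+1)+1:ℕ):ℚ) - 2*(a:ℚ))]
      congr 1
      · refine Finset.prod_congr rfl (fun a _ => ?_); push_cast; ring
      · push_cast; ring
    rw [h2, ih]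
    have h3 : Nat.doubleFactorial (2*(m+1)+1) = (2*m+3) * Nat.doubleFactorial (2*m+1) := by
      rw [show 2*(m+1)+1 = (2*m+1)+2 by ring, Nat.doubleFactorial_add_two]
    rw [h3]
    push_cast
    ring

lemma keysum (n : ℕ) : ∀ (x : ℚ), (∀ a ∈ Finset.range (n+1), x - 2*a ≠ 0) →
    (∑ a ∈ Finset.range (n+1), ((-1:ℚ)^a * (n.choose a)) / (x - 2*a))
      = (-1)^n * 2^n * n.factorial / ∏ a ∈ Finset.range (n+1), (x - 2*a) := by
  induction n with
  | zero => intro x hx; simp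
  | succ n ih =>
    intro x hx
    have hx1 : ∀ a ∈ Finset.range (n+1), x - 2*a ≠ 0 := by
      intro a ha; exact hx a (Finset.mem_range.mpr (Nat.lt_succ_of_lt (Finset.mem_range.mp ha)))
    have hx2 : ∀ a ∈ Finset.range (n+1), (x - 2) - 2*a ≠ 0 := by
      intro a ha
      have := hx (a+1) (Finset.mem_range.mpr (by have := Finset.mem_range.mp ha; omega))
      push_cast at this ⊢
      intro h; apply this; linarith
    have split : (∑ a ∈ Finset.range (n+2), ((-1:ℚ)^a * ((n+1).choose a)) / (x - 2*a))
        = (∑ a ∈ Finset.range (n+1), ((-1:ℚ)^a * (n.choose a)) / (x - 2*a))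
          - (∑ a ∈ Finset.range (n+1), ((-1:ℚ)^a * (n.choose a)) / ((x-2) - 2*a)) := by
      have hGext : (∑ a ∈ Finset.range (n+2), ((-1:ℚ)^a * (n.choose a)) / (x - 2*(a:ℚ)))
          = ∑ a ∈ Finset.range (n+1), ((-1:ℚ)^a * (n.choose a)) / (x - 2*(a:ℚ)) := by
        rw [Finset.sum_range_succ]; simp
      rw [← hGext,
        Finset.sum_range_succ' (fun a => ((-1:ℚ)^a * ((n+1).choose a)) / (x - 2*(a:ℚ))),
        Finset.sum_range_succ' (fun a => ((-1:ℚ)^a * (n.choose a)) / (x - 2*(a:ℚ)))]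
      have hsplit2 : ∀ a ∈ Finset.range (n+1),
          ((-1:ℚ)^(a+1) * ((n+1).choose (a+1))) / (x - 2*((a+1:ℕ):ℚ))
          = ((-1:ℚ)^(a+1) * (n.choose (a+1))) / (x - 2*((a+1:ℕ):ℚ))
            - ((-1:ℚ)^a * (n.choose a)) / ((x-2) - 2*(a:ℚ)) := by
        intro a _
        have hc : (((n+1).choose (a+1) : ℕ) : ℚ) = (n.choose (a+1) : ℚ) + (n.choose a : ℚ) := by
          rw [Nat.choose_succ_succ]; push_cast; ring
        have hd : (x - 2*((a+1:ℕ):ℚ)) = (x-2) - 2*(a:ℚ) := by push_cast; ring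
        rw [hc, hd]
        ring
      rw [Finset.sum_congr rfl hsplit2, Finset.sum_sub_distrib]
      simp only [Nat.choose_zero_right, pow_zero, Nat.cast_one, Nat.cast_zero, one_mul, mul_zero]
      ring
    have hPne : (∏ a ∈ Finset.range (n+1), (x - 2*(a:ℚ))) ≠ 0 := Finset.prod_ne_zero_iff.mpr hx1
    have hQne : (∏ a ∈ Finset.range (n+1), ((x-2) - 2*(a:ℚ))) ≠ 0 := Finset.prod_ne_zero_iff.mpr hx2
    have hRne : (∏ a ∈ Finset.range (n+2), (x - 2*(a:ℚ))) ≠ 0 := Finset.prod_ne_zero_iff.mpr hx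
    have hprod1 : (∏ a ∈ Finset.range (n+2), (x - 2*(a:ℚ)))
        = (∏ a ∈ Finset.range (n+1), (x - 2*(a:ℚ))) * (x - 2*((n:ℚ)+1)) := by
      rw [Finset.prod_range_succ]
      push_cast
      ring_nf
    have hprod2 : (∏ a ∈ Finset.range (n+2), (x - 2*(a:ℚ)))
        = (∏ a ∈ Finset.range (n+1), ((x-2) - 2*(a:ℚ))) * x := by
      rw [Finset.prod_range_succ' (fun a => x - 2*((a:ℚ)))]
      congr 1
      · refine Finset.prod_congr rfl (fun a _ => ?_); push_cast; ring
      · norm_num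
    rw [split, ih x hx1, ih (x-2) hx2, Nat.factorial_succ]
    push_cast
    rw [div_sub_div _ _ hPne hQne, div_eq_div_iff (mul_ne_zero hPne hQne) hRne]
    linear_combination ((-1:ℚ)^n*2^n*(n.factorial:ℚ)*(∏ a ∈ Finset.range (n+1), ((x-2) - 2*(a:ℚ)))) * hprod1 - ((-1:ℚ)^n*2^n*(n.factorial:ℚ)*(∏ a ∈ Finset.range (n+1), (x - 2*(a:ℚ)))) * hprod2

theorem stmt_0 (k : ℕ) (hk : 1 ≤ k) :
    (∑ a ∈ Finset.range (k + 1),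
        if (k : ℤ) - 2 * a ≠ 0 then
          ((-1 : ℚ) ^ a * (k.choose a)) / ((k : ℚ) - 2 * a)
        else 0)
      = if Odd k then
          (2 : ℚ) ^ k * (-2 : ℚ) ^ ((k - 1) / 2) *
            (Nat.factorial ((k - 1) / 2) : ℚ) / (Nat.doubleFactorial k : ℚ)
        else 0 := by
  by_cases hodd : Odd k
  · rw [if_pos hodd]
    obtain ⟨m, hm⟩ := hodd
    subst hm
    have hne : ∀ a ∈ Finset.range (2*m+1+1), ((2*m+1:ℕ):ℚ) - 2*a ≠ 0 := by
      intro a _ h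
      have : (2*m+1:ℕ) = 2*a := by
        have : ((2*m+1:ℕ):ℚ) = 2*(a:ℚ) := by linarith
        exact_mod_cast this
      omega
    have hif : (∑ a ∈ Finset.range (2*m+1 + 1),
        if ((2*m+1:ℕ) : ℤ) - 2 * a ≠ 0 then
          ((-1 : ℚ) ^ a * ((2*m+1).choose a)) / (((2*m+1:ℕ) : ℚ) - 2 * a)
        else 0)
        = ∑ a ∈ Finset.range (2*m+1+1), ((-1:ℚ)^a * ((2*m+1).choose a)) / (((2*m+1:ℕ):ℚ) - 2*a) := by
      refine Finset.sum_congr rfl (fun a ha => ?_)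
      rw [if_pos]
      intro h
      have : (2*m+1:ℕ) = 2*a := by omega
      omega
    rw [hif, keysum (2*m+1) _ hne, prodval m]
    have hmdiv : (2*m+1-1)/2 = m := by omega
    rw [hmdiv]
    have hfa : ((2*m+1).factorial : ℚ)
        = (Nat.doubleFactorial (2*m+1) : ℚ) * 2^m * (m.factorial : ℚ) := by
      have := Nat.factorial_eq_mul_doubleFactorial (2*m)
      rw [Nat.doubleFactorial_two_mul] at this
      rw [mul_assoc]
      exact_mod_cast this
    rw [hfa]
    have hD : (Nat.doubleFactorial (2*m+1) : ℚ) ≠ 0 := by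
      exact_mod_cast (Nat.doubleFactorial_pos (2*m+1)).ne'
    have hden : ((-1:ℚ))^(m+1) * ((Nat.doubleFactorial (2*m+1):ℚ))^2 ≠ 0 := by
      apply mul_ne_zero
      · exact pow_ne_zero _ (by norm_num)
      · exact pow_ne_zero _ hD
    rw [div_eq_div_iff hden hD]
    have hpow : ((-1:ℚ))^(2*m+1) = -1 := by
      rw [pow_succ, pow_mul]; norm_num
    have hpow2 : ((-2:ℚ))^m = (-1)^m * 2^m := by
      rw [show (-2:ℚ) = (-1)*2 by norm_num, mul_pow]
    have hpow3 : ((-1:ℚ))^m * (-1)^m = 1 := by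
      rw [← pow_add]; exact Even.neg_one_pow ⟨m, rfl⟩
    rw [hpow, hpow2, pow_succ]
    linear_combination (2^(2*m+1) * 2^m * (m.factorial:ℚ) * (Nat.doubleFactorial (2*m+1):ℚ)^2) * hpow3
  · rw [if_neg hodd]
    have hEven : Even k := Nat.not_odd_iff_even.mp hodd
    refine Finset.sum_involution (fun a _ => k - a) ?_ ?_ ?_ ?_
    · intro a ha
      have hak : a ≤ k := Nat.lt_succ_iff.mp (Finset.mem_range.mp ha)
      by_cases h0 : (k:ℤ) - 2*a = 0
      · have h0' : (k:ℤ) - 2*((k-a:ℕ):ℤ) = 0 := by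
          have : ((k-a:ℕ):ℤ) = (k:ℤ) - a := by push_cast [hak]; ring
          omega
        rw [if_neg (not_not.mpr h0), if_neg (not_not.mpr h0')]
        norm_num
      · have h0' : (k:ℤ) - 2*((k-a:ℕ):ℤ) ≠ 0 := by
          have : ((k-a:ℕ):ℤ) = (k:ℤ) - a := by push_cast [hak]; ring
          omega
        rw [if_pos h0, if_pos h0']
        have hd : ((k:ℚ) - 2*a) ≠ 0 := by
          intro h
          apply h0
          have : ((k:ℤ):ℚ) - 2*((a:ℤ):ℚ) = 0 := by push_cast; linarith
          exact_mod_cast this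
        have hden' : ((k:ℚ) - 2*((k-a:ℕ):ℚ)) = -((k:ℚ) - 2*a) := by
          push_cast [hak]; ring
        have hchoose : k.choose (k - a) = k.choose a := Nat.choose_symm hak
        have hpow : ((-1:ℚ))^(k-a) * (-1)^a = 1 := by
          rw [← pow_add, Nat.sub_add_cancel hak]; exact Even.neg_one_pow hEven
        have h2 : ((-1:ℚ)^a)*(-1)^a = 1 := by
          rw [← pow_add]; exact Even.neg_one_pow ⟨a, rfl⟩
        have heq : ((-1:ℚ))^(k-a) = (-1)^a := by
          linear_combination ((-1:ℚ)^a)*hpow - ((-1:ℚ)^(k-a))*h2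
        rw [heq, hchoose, hden', div_neg]
        ring
    · intro a ha hne heq
      have hak : a ≤ k := Nat.lt_succ_iff.mp (Finset.mem_range.mp ha)
      have heq' : k - a = a := heq
      have : (k:ℤ) - 2*a = 0 := by omega
      exact hne (if_neg (not_not.mpr this))
    · intro a ha
      have hak : a ≤ k := Nat.lt_succ_iff.mp (Finset.mem_range.mp ha)
      exact Finset.mem_range.mpr (show k - a < k + 1 by omega)
    · intro a ha
      have hak : a ≤ k := Nat.lt_succ_iff.mp (Finset.mem_range.mp ha)
      show k - (k - a) = a
      omega
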